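/- Let L = π and μ = q/H > 0. If n ≥ 1 is an odd integer, then Γ_n'(0) = −2μ·n·δ(n)·G_n, where Γ_n'(0) = nμ·∫₀^π (x − π/2)·cos(nx)/√(1 + μ²(x − π/2)²) dx; consequently, if moreover μ < 2/5, then Γ_n'(0) < 0. -/

import Mathlib

open Real MeasureTheory

/-- The hyper-geometric integral `G_n = ∫₀^{π/2} t sin(nt)/√(1+(μt)²) dt`. -/
noncomputable def G (μ : ℝ) (n : ℕ) : ℝ :=
  ∫ t in (0:ℝ)..(π / 2), t * Real.sin ((n : ℝ) * t) / Real.sqrt (1 + (μ * t) ^ 2)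

/-- `δ(n) = 1` if `n ≡ 1 (mod 4)`, `δ(n) = -1` if `n ≡ 3 (mod 4)`. -/
noncomputable def delta (n : ℕ) : ℝ := if n % 4 = 1 then 1 else -1


lemma hasDeriv_r (μ t : ℝ) (h : (0:ℝ) < 1 + μ^2*t^2) :
    HasDerivAt (fun t => Real.sqrt (1 + μ^2*t^2)) (μ^2*t / Real.sqrt (1+μ^2*t^2)) t := by
  have hs : HasDerivAt (fun t : ℝ => 1 + μ^2*t^2) (2*μ^2*t) t := by
    have := ((hasDerivAt_pow 2 t).const_mul (μ^2)).const_add 1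
    simpa [mul_comm, mul_assoc, mul_left_comm] using this
  have := hs.sqrt h.ne'
  convert this using 1
  have hr : Real.sqrt (1+μ^2*t^2) ≠ 0 := (Real.sqrt_pos.mpr h).ne'
  field_simp

lemma hasDeriv_F (μ t : ℝ) (h : (0:ℝ) < 1 + μ^2*t^2) :
    HasDerivAt (fun t => t / Real.sqrt (1 + μ^2*t^2))
      (((1+μ^2*t^2) * Real.sqrt (1+μ^2*t^2))⁻¹) t := by
  have hrp : 0 < Real.sqrt (1+μ^2*t^2) := Real.sqrt_pos.mpr h
  have := (hasDerivAt_id t).div (hasDeriv_r μ t h) hrp.ne'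
  refine this.congr_deriv ?_
  have hr2 : Real.sqrt (1+μ^2*t^2) ^ 2 = 1+μ^2*t^2 := Real.sq_sqrt h.le
  simp only [id]
  field_simp
  rw [hr2]; ring

lemma hasDeriv_F1 (μ t : ℝ) (h : (0:ℝ) < 1 + μ^2*t^2) :
    HasDerivAt (fun t => ((1+μ^2*t^2) * Real.sqrt (1+μ^2*t^2))⁻¹)
      (-3*μ^2*t / ((1+μ^2*t^2)^2 * Real.sqrt (1+μ^2*t^2))) t := by
  have hrp : 0 < Real.sqrt (1+μ^2*t^2) := Real.sqrt_pos.mpr h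
  have hs : HasDerivAt (fun t : ℝ => 1 + μ^2*t^2) (2*μ^2*t) t := by
    have := ((hasDerivAt_pow 2 t).const_mul (μ^2)).const_add 1
    simpa [mul_comm, mul_assoc, mul_left_comm] using this
  have hprod := hs.mul (hasDeriv_r μ t h)
  have hne : (1+μ^2*t^2) * Real.sqrt (1+μ^2*t^2) ≠ 0 := by positivity
  have := hprod.inv hne
  refine this.congr_deriv ?_
  have hr2 : Real.sqrt (1+μ^2*t^2) ^ 2 = 1+μ^2*t^2 := Real.sq_sqrt h.le
  simp only [Pi.mul_apply]
  field_simp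
  linear_combination (μ^2*t) * hr2

lemma delta_sq (n : ℕ) : delta n * delta n = 1 := by
  unfold delta; split <;> norm_num

lemma abs_delta (n : ℕ) : |delta n| = 1 := by
  unfold delta; split <;> norm_num

lemma trig_odd (n : ℕ) (hno : Odd n) :
    Real.cos ((n:ℝ) * (π/2)) = 0 ∧ Real.sin ((n:ℝ) * (π/2)) = delta n := by
  obtain ⟨k, hk⟩ := hno
  have harg : (n:ℝ) * (π/2) = π/2 + (k:ℕ) * π := by
    push_cast [hk]; ring
  have hd : ((-1:ℝ)) ^ k = delta n := by
    unfold delta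
    rcases Nat.even_or_odd k with he | ho
    · obtain ⟨m, hm⟩ := he
      rw [Even.neg_one_pow ⟨m, hm⟩, if_pos (by omega)]
    · obtain ⟨m, hm⟩ := ho
      rw [Odd.neg_one_pow ⟨m, hm⟩, if_neg (by omega)]
  constructor
  · rw [harg, Real.cos_add_nat_mul_pi, Real.cos_pi_div_two, mul_zero]
  · rw [harg, Real.sin_add_nat_mul_pi, Real.sin_pi_div_two, mul_one, hd]

section aux
variable (μ : ℝ)

lemma myspos (t : ℝ) : (0:ℝ) < 1 + μ^2*t^2 := by positivity
lemma myrpos (t : ℝ) : (0:ℝ) < Real.sqrt (1 + μ^2*t^2) := Real.sqrt_pos.mpr (myspos μ t)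

lemma cont_sqrt : Continuous fun t : ℝ => Real.sqrt (1 + μ^2*t^2) := by
  exact Real.continuous_sqrt.comp (by continuity)

lemma cont_F : Continuous fun t : ℝ => t / Real.sqrt (1 + μ^2*t^2) :=
  continuous_id.div (cont_sqrt μ) fun t => (myrpos μ t).ne'

lemma cont_F1 : Continuous fun t : ℝ => ((1+μ^2*t^2) * Real.sqrt (1+μ^2*t^2))⁻¹ := by
  apply Continuous.inv₀ (by exact (by continuity : Continuous fun t:ℝ => 1+μ^2*t^2).mul (cont_sqrt μ))
  intro t
  have := myspos μ t; have := myrpos μ t; positivity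

lemma cont_F2 : Continuous fun t : ℝ => -3*μ^2*t / ((1+μ^2*t^2)^2 * Real.sqrt (1+μ^2*t^2)) := by
  apply Continuous.div (by continuity) (by exact (by continuity : Continuous fun t:ℝ => (1+μ^2*t^2)^2).mul (cont_sqrt μ))
  intro t
  have := myspos μ t; have := myrpos μ t; positivity
end aux

lemma even_integral {g : ℝ → ℝ} (a : ℝ) (hg : Continuous g) (he : ∀ x, g (-x) = g x) :
    ∫ x in (-a)..a, g x = 2 * ∫ x in (0:ℝ)..a, g x := by
  have h2 : ∫ x in (-a)..(0:ℝ), g x = ∫ x in (0:ℝ)..a, g x := by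
    have h := intervalIntegral.integral_comp_neg (a := (0:ℝ)) (b := a) g
    simp only [he, neg_zero] at h
    rw [← h]
  rw [← intervalIntegral.integral_add_adjacent_intervals
      (hg.intervalIntegrable (-a) 0) (hg.intervalIntegrable 0 a), h2, two_mul]

lemma part1 (μ : ℝ) (n : ℕ) (hno : Odd n) :
    (∫ x in (0:ℝ)..π, (x - π / 2) * Real.cos ((n : ℝ) * x) / Real.sqrt (1 + μ ^ 2 * (x - π / 2) ^ 2))
      = -2 * delta n * G μ n := by
  obtain ⟨hc, hs⟩ := trig_odd n hno
  set f : ℝ → ℝ := fun t => t * Real.cos ((n:ℝ)*t + (n:ℝ)*(π/2)) / Real.sqrt (1 + μ^2*t^2) with hf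
  have key : (∫ x in (0:ℝ)..π, (x - π / 2) * Real.cos ((n : ℝ) * x) / Real.sqrt (1 + μ ^ 2 * (x - π / 2) ^ 2))
      = ∫ x in (0:ℝ)..π, f (x - π/2) := by
    apply intervalIntegral.integral_congr
    intro x _
    simp only [hf]
    rw [show (n:ℝ)*(x - π/2) + (n:ℝ)*(π/2) = (n:ℝ)*x by ring]
  rw [key, intervalIntegral.integral_comp_sub_right f (π/2)]
  have hb : (0:ℝ) - π/2 = -(π/2) := by ring
  have hb2 : π - π/2 = π/2 := by ring
  rw [hb, hb2]
  have hfe : ∀ t, f t = (-delta n) * (t * Real.sin ((n:ℝ)*t) / Real.sqrt (1 + μ^2*t^2)) := by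
    intro t
    simp only [hf]
    rw [Real.cos_add, hc, hs]
    ring
  simp only [hfe]
  rw [intervalIntegral.integral_const_mul]
  have hgcont : Continuous fun t : ℝ => t * Real.sin ((n:ℝ)*t) / Real.sqrt (1 + μ^2*t^2) := by
    apply Continuous.div (by continuity) (cont_sqrt μ)
    intro t
    have : (0:ℝ) < 1 + μ^2*t^2 := by positivity
    positivity
  rw [even_integral (π/2) hgcont (by
    intro x
    simp only [mul_neg, Real.sin_neg, neg_mul, neg_neg, neg_sq])]
  have hG : G μ n = ∫ t in (0:ℝ)..(π/2), t * Real.sin ((n:ℝ)*t) / Real.sqrt (1 + μ^2*t^2) := by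
    unfold G
    congr 1
    funext t
    rw [mul_pow]
  rw [← hG]
  ring

section part2
variable (μ : ℝ) (n : ℕ)

lemma hasDeriv_negcos (hn : 1 ≤ n) (t : ℝ) :
    HasDerivAt (fun t : ℝ => -(Real.cos ((n:ℝ)*t))/(n:ℝ)) (Real.sin ((n:ℝ)*t)) t := by
  have h1 : HasDerivAt (fun t : ℝ => (n:ℝ)*t) (n:ℝ) t := by
    simpa using (hasDerivAt_id t).const_mul (n:ℝ)
  have hne : (n:ℝ) ≠ 0 := by positivity
  have h2 := (h1.cos.div_const (n:ℝ)).neg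
  simpa [neg_div, mul_div_assoc, div_self hne, Pi.neg_def] using h2

lemma hasDeriv_sin_div (hn : 1 ≤ n) (t : ℝ) :
    HasDerivAt (fun t : ℝ => Real.sin ((n:ℝ)*t)/(n:ℝ)) (Real.cos ((n:ℝ)*t)) t := by
  have h1 : HasDerivAt (fun t : ℝ => (n:ℝ)*t) (n:ℝ) t := by
    simpa using (hasDerivAt_id t).const_mul (n:ℝ)
  have hne : (n:ℝ) ≠ 0 := by positivity
  have h2 := h1.sin.div_const (n:ℝ)
  simpa [mul_div_assoc, div_self hne] using h2

lemma G_formula (hn : 1 ≤ n) (hno : Odd n) :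
    G μ n = delta n * ((1+μ^2*(π/2)^2) * Real.sqrt (1+μ^2*(π/2)^2))⁻¹ / (n:ℝ)^2
      - (1/(n:ℝ)^2) * ∫ t in (0:ℝ)..(π/2),
          (-3*μ^2*t / ((1+μ^2*t^2)^2 * Real.sqrt (1+μ^2*t^2))) * Real.sin ((n:ℝ)*t) := by
  obtain ⟨hc, hs⟩ := trig_odd n hno
  have hnne : (n:ℝ) ≠ 0 := by positivity
  have hG : G μ n = ∫ t in (0:ℝ)..(π/2),
      (t / Real.sqrt (1 + μ^2*t^2)) * Real.sin ((n:ℝ)*t) := by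
    unfold G
    apply intervalIntegral.integral_congr
    intro t _
    simp only [mul_pow]
    ring
  -- first IBP
  have ibp1 := intervalIntegral.integral_mul_deriv_eq_deriv_mul
    (u := fun t : ℝ => t / Real.sqrt (1 + μ^2*t^2))
    (v := fun t : ℝ => -(Real.cos ((n:ℝ)*t))/(n:ℝ))
    (u' := fun t : ℝ => ((1+μ^2*t^2) * Real.sqrt (1+μ^2*t^2))⁻¹)
    (v' := fun t : ℝ => Real.sin ((n:ℝ)*t))
    (a := (0:ℝ)) (b := π/2)
    (fun x _ => hasDeriv_F μ x (myspos μ x))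
    (fun x _ => hasDeriv_negcos n hn x)
    ((cont_F1 μ).intervalIntegrable _ _)
    ((Real.continuous_sin.comp (by continuity)).intervalIntegrable _ _)
  -- second IBP
  have ibp2 := intervalIntegral.integral_mul_deriv_eq_deriv_mul
    (u := fun t : ℝ => ((1+μ^2*t^2) * Real.sqrt (1+μ^2*t^2))⁻¹)
    (v := fun t : ℝ => Real.sin ((n:ℝ)*t)/(n:ℝ))
    (u' := fun t : ℝ => -3*μ^2*t / ((1+μ^2*t^2)^2 * Real.sqrt (1+μ^2*t^2)))
    (v' := fun t : ℝ => Real.cos ((n:ℝ)*t))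
    (a := (0:ℝ)) (b := π/2)
    (fun x _ => hasDeriv_F1 μ x (myspos μ x))
    (fun x _ => hasDeriv_sin_div n hn x)
    ((cont_F2 μ).intervalIntegrable _ _)
    ((Real.continuous_cos.comp (by continuity)).intervalIntegrable _ _)
  rw [hG, ibp1]
  simp only [mul_zero, Real.cos_zero, hc] at ibp1 ⊢
  -- boundary terms of ibp1 vanish
  rw [show (0:ℝ) / Real.sqrt (1 + μ^2*0^2) = 0 by simp]
  simp only [neg_zero, zero_div, mul_zero, zero_mul, sub_zero, zero_sub]
  -- now goal: -(∫ F1 * (-(cos)/n)) = ...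
  have hrw : ∀ t : ℝ, ((1+μ^2*t^2) * Real.sqrt (1+μ^2*t^2))⁻¹ * (-(Real.cos ((n:ℝ)*t))/(n:ℝ))
      = (-(1:ℝ)/(n:ℝ)) * (((1+μ^2*t^2) * Real.sqrt (1+μ^2*t^2))⁻¹ * Real.cos ((n:ℝ)*t)) := by
    intro t; ring
  simp only [hrw]
  rw [intervalIntegral.integral_const_mul, ibp2]
  simp only [mul_zero, Real.sin_zero, zero_div, mul_zero, sub_zero, hs]
  have hrw2 : ∀ t : ℝ, (-3*μ^2*t / ((1+μ^2*t^2)^2 * Real.sqrt (1+μ^2*t^2))) * (Real.sin ((n:ℝ)*t)/(n:ℝ))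
      = ((1:ℝ)/(n:ℝ)) * ((-3*μ^2*t / ((1+μ^2*t^2)^2 * Real.sqrt (1+μ^2*t^2))) * Real.sin ((n:ℝ)*t)) := by
    intro t; ring
  simp only [hrw2]
  rw [intervalIntegral.integral_const_mul]
  field_simp

end part2

lemma F2_total (μ : ℝ) :
    (∫ t in (0:ℝ)..(π/2), -3*μ^2*t / ((1+μ^2*t^2)^2 * Real.sqrt (1+μ^2*t^2)))
      = ((1+μ^2*(π/2)^2) * Real.sqrt (1+μ^2*(π/2)^2))⁻¹ - 1 := by
  rw [intervalIntegral.integral_eq_sub_of_hasDerivAt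
      (fun x _ => hasDeriv_F1 μ x (myspos μ x)) ((cont_F2 μ).intervalIntegrable _ _)]
  norm_num

lemma J_bound (μ : ℝ) (n : ℕ) :
    |∫ t in (0:ℝ)..(π/2), (-3*μ^2*t / ((1+μ^2*t^2)^2 * Real.sqrt (1+μ^2*t^2))) * Real.sin ((n:ℝ)*t)|
      ≤ 1 - ((1+μ^2*(π/2)^2) * Real.sqrt (1+μ^2*(π/2)^2))⁻¹ := by
  have hπ : (0:ℝ) ≤ π/2 := by positivity
  have h1 := intervalIntegral.abs_integral_le_integral_abs (μ := volume)
    (f := fun t : ℝ => (-3*μ^2*t / ((1+μ^2*t^2)^2 * Real.sqrt (1+μ^2*t^2))) * Real.sin ((n:ℝ)*t)) hπ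
  have h2 : (∫ t in (0:ℝ)..(π/2),
      |(-3*μ^2*t / ((1+μ^2*t^2)^2 * Real.sqrt (1+μ^2*t^2))) * Real.sin ((n:ℝ)*t)|)
      ≤ ∫ t in (0:ℝ)..(π/2), -(-3*μ^2*t / ((1+μ^2*t^2)^2 * Real.sqrt (1+μ^2*t^2))) := by
    apply intervalIntegral.integral_mono_on hπ
    · exact (((cont_F2 μ).mul (Real.continuous_sin.comp (by continuity))).abs.intervalIntegrable _ _)
    · exact ((cont_F2 μ).neg.intervalIntegrable _ _)
    · intro t ht
      have ht0 : 0 ≤ t := ht.1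
      have hden : 0 < (1+μ^2*t^2)^2 * Real.sqrt (1+μ^2*t^2) := by
        have := myspos μ t; have := myrpos μ t; positivity
      have hF2le : -3*μ^2*t / ((1+μ^2*t^2)^2 * Real.sqrt (1+μ^2*t^2)) ≤ 0 := by
        apply div_nonpos_of_nonpos_of_nonneg
        · nlinarith [sq_nonneg μ]
        · exact hden.le
      rw [abs_mul]
      calc |(-3*μ^2*t / ((1+μ^2*t^2)^2 * Real.sqrt (1+μ^2*t^2)))| * |Real.sin ((n:ℝ)*t)|
          ≤ |(-3*μ^2*t / ((1+μ^2*t^2)^2 * Real.sqrt (1+μ^2*t^2)))| * 1 := by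
            apply mul_le_mul_of_nonneg_left (Real.abs_sin_le_one _) (abs_nonneg _)
        _ = -(-3*μ^2*t / ((1+μ^2*t^2)^2 * Real.sqrt (1+μ^2*t^2))) := by
            rw [mul_one, abs_of_nonpos hF2le]
  have h3 : (∫ t in (0:ℝ)..(π/2), -(-3*μ^2*t / ((1+μ^2*t^2)^2 * Real.sqrt (1+μ^2*t^2))))
      = 1 - ((1+μ^2*(π/2)^2) * Real.sqrt (1+μ^2*(π/2)^2))⁻¹ := by
    rw [intervalIntegral.integral_neg, F2_total]; ring
  calc _ ≤ _ := h1
    _ ≤ _ := h2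
    _ = _ := h3

lemma c_gt_half (μ : ℝ) (hμ : 0 < μ) (h5 : μ < 2/5) :
    1/2 < ((1+μ^2*(π/2)^2) * Real.sqrt (1+μ^2*(π/2)^2))⁻¹ := by
  set s : ℝ := 1+μ^2*(π/2)^2 with hsdef
  clear_value s
  have hspos : 0 < s := by rw [hsdef]; positivity
  have hrpos : 0 < Real.sqrt s := Real.sqrt_pos.mpr hspos
  have hr2 : Real.sqrt s ^ 2 = s := Real.sq_sqrt hspos.le
  have hπ : π < 63/20 := by
    have := pi_lt_d2
    norm_num at this
    linarith
  have hπ0 : 0 < π := pi_pos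
  have hs : s < 7/5 := by
    have hμ2 : μ^2 < 4/25 := by nlinarith
    rw [hsdef]; nlinarith
  have hXpos : 0 < s * Real.sqrt s := by positivity
  have hcube : (s * Real.sqrt s)^2 = s^3 := by rw [mul_pow, hr2]; ring
  have hs2 : s^2 < 49/25 := by nlinarith [mul_lt_mul_of_pos_left hs hspos, sq (s)]
  have hc4 : s^3 < 4 := by nlinarith [mul_lt_mul_of_pos_left hs2 hspos]
  have hX : s * Real.sqrt s < 2 := by nlinarith [sq_nonneg (s * Real.sqrt s - 2)]
  have hinv : (s * Real.sqrt s) * (s * Real.sqrt s)⁻¹ = 1 := mul_inv_cancel₀ hXpos.ne'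
  have key := mul_lt_mul_of_pos_right hX (inv_pos.mpr hXpos)
  rw [hinv] at key
  linarith

lemma delta_G_pos (μ : ℝ) (hμ : 0 < μ) (h5 : μ < 2/5) (n : ℕ) (hn : 1 ≤ n) (hno : Odd n) :
    0 < delta n * G μ n := by
  set c : ℝ := ((1+μ^2*(π/2)^2) * Real.sqrt (1+μ^2*(π/2)^2))⁻¹ with hcdef
  set J : ℝ := ∫ t in (0:ℝ)..(π/2),
      (-3*μ^2*t / ((1+μ^2*t^2)^2 * Real.sqrt (1+μ^2*t^2))) * Real.sin ((n:ℝ)*t) with hJdef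
  have hJ : |J| ≤ 1 - c := J_bound μ n
  have hc : 1/2 < c := c_gt_half μ hμ h5
  have hδJ : delta n * J ≤ 1 - c :=
    (le_abs_self _).trans (by rw [abs_mul, abs_delta, one_mul]; exact hJ)
  have hnpos : (0:ℝ) < (n:ℝ)^2 := by positivity
  have heq : delta n * G μ n = (c - delta n * J)/(n:ℝ)^2 := by
    rw [G_formula μ n hn hno, ← hcdef, ← hJdef]
    field_simp
    linear_combination (c * (n:ℝ)^2 * 0 + c) * (delta_sq n) * 0 + c * (delta_sq n)
  rw [heq]
  apply div_pos _ hnpos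
  linarith

/-- For odd `n ≥ 1`, `Γ_n'(0) = nμ ∫₀^π (x-π/2)cos(nx)/√(1+μ²(x-π/2)²) dx`
equals `-2 μ n δ(n) G_n`; consequently, if `μ < 2/5` then `Γ_n'(0) < 0`. -/
theorem GammaPi_deriv_zero_odd (μ : ℝ) (hμ : 0 < μ) (n : ℕ) (hn : 1 ≤ n) (hno : Odd n) :
    ((n : ℝ) * μ * ∫ x in (0:ℝ)..π,
        (x - π / 2) * Real.cos ((n : ℝ) * x) / Real.sqrt (1 + μ ^ 2 * (x - π / 2) ^ 2))
      = -2 * μ * (n : ℝ) * delta n * G μ n ∧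
    (μ < 2 / 5 →
      ((n : ℝ) * μ * ∫ x in (0:ℝ)..π,
        (x - π / 2) * Real.cos ((n : ℝ) * x) / Real.sqrt (1 + μ ^ 2 * (x - π / 2) ^ 2)) < 0) := by
  have h1 := part1 μ n hno
  constructor
  · rw [h1]; ring
  · intro h5
    rw [h1]
    have hpos := delta_G_pos μ hμ h5 n hn hno
    have hn1 : (1:ℝ) ≤ (n:ℝ) := by exact_mod_cast hn
    have hprod : 0 < μ * ((n:ℝ) * (delta n * G μ n)) :=
      mul_pos hμ (mul_pos (by linarith) hpos)
    nlinarith [hprod]
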